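/- Let n >= 3, zeta1 = (n-2)/C(n,2), zeta2 = C(n-2,2)/C(n,2), and lambda, gamma in [0,1]. Then (1/C(n,2)) * sum over s >= 0 of sum over l, m >= 0 with l + m <= s of [s!/(l! m! (s-l-m)!)] * zeta1^{l+m} * zeta2^{s-l-m} * (1-lambda)^l * (1-gamma)^m = 1/(1 + (n-2)(lambda+gamma)). -/

import Mathlib

lemma trinom_coeff (s l m : ℕ) (hl : l ≤ s) (hm : m ≤ s - l) :
    ((s.factorial : ℝ) / ((l.factorial : ℝ) * (m.factorial : ℝ) *
        ((s - l - m).factorial : ℝ))) = (s.choose l : ℝ) * ((s - l).choose m : ℝ) := by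
  have h1 : s.choose l * l.factorial * (s - l).factorial = s.factorial :=
    Nat.choose_mul_factorial_mul_factorial hl
  have h2 : (s - l).choose m * m.factorial * (s - l - m).factorial = (s - l).factorial :=
    Nat.choose_mul_factorial_mul_factorial hm
  have hfac : ∀ k : ℕ, (0:ℝ) < (k.factorial : ℝ) := fun k => by
    exact_mod_cast k.factorial_pos
  rw [div_eq_iff (by positivity)]
  rw [← h1, ← h2]
  push_cast
  ring

lemma trinom (a b c : ℝ) (s : ℕ) :
    ∑ l ∈ Finset.range (s + 1), ∑ m ∈ Finset.range (s + 1 - l),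
      ((s.factorial : ℝ) / ((l.factorial : ℝ) * (m.factorial : ℝ) *
          ((s - l - m).factorial : ℝ))) * a ^ l * b ^ m * c ^ (s - l - m)
    = (a + b + c) ^ s := by
  rw [show a + b + c = a + (b + c) by ring, add_pow]
  apply Finset.sum_congr rfl
  intro l hl
  have hl' : l ≤ s := Nat.lt_succ_iff.mp (Finset.mem_range.mp hl)
  rw [add_pow, Finset.mul_sum, Finset.sum_mul]
  rw [show s + 1 - l = s - l + 1 by omega]
  apply Finset.sum_congr rfl
  intro m hm
  have hm' : m ≤ s - l := Nat.lt_succ_iff.mp (Finset.mem_range.mp hm)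
  rw [trinom_coeff s l m hl' hm']
  ring

theorem alphaD_series_closed_form (n : ℕ) (lam γ : ℝ)
    (hn : 3 ≤ n) (hlam : lam ∈ Set.Icc (0 : ℝ) 1) (hγ : γ ∈ Set.Icc (0 : ℝ) 1) :
    let ζ1 : ℝ := ((n : ℝ) - 2) / (n.choose 2 : ℝ)
    let ζ2 : ℝ := ((n - 2).choose 2 : ℝ) / (n.choose 2 : ℝ)
    (1 / (n.choose 2 : ℝ)) *
      ∑' s : ℕ, ∑ l ∈ Finset.range (s + 1), ∑ m ∈ Finset.range (s + 1 - l),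
        ((s.factorial : ℝ) / ((l.factorial : ℝ) * (m.factorial : ℝ) *
            ((s - l - m).factorial : ℝ))) *
          ζ1 ^ (l + m) * ζ2 ^ (s - l - m) * (1 - lam) ^ l * (1 - γ) ^ m
      = 1 / (1 + ((n : ℝ) - 2) * (lam + γ)) := by
  intro ζ1 ζ2
  obtain ⟨hl0, hl1⟩ := hlam
  obtain ⟨hg0, hg1⟩ := hγ
  -- basic facts
  have hC : (0:ℝ) < (n.choose 2 : ℝ) := by
    have : 0 < n.choose 2 := Nat.choose_pos (by omega)
    exact_mod_cast this
  have hn2 : ((n:ℝ) - 2) = ((n - 2 : ℕ) : ℝ) := by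
    have : (2:ℕ) ≤ n := by omega
    push_cast [Nat.cast_sub this]; ring
  -- key combinatorial identity
  have hkey : n.choose 2 = (n - 2).choose 2 + 2 * (n - 2) + 1 := by
    obtain ⟨k, rfl⟩ : ∃ k, n = k + 3 := ⟨n - 3, by omega⟩
    simp [Nat.choose_succ_succ, Nat.choose_one_right]
    omega
  set r : ℝ := ζ1 * (1 - lam) + ζ1 * (1 - γ) + ζ2 with hr
  have hz1 : (0:ℝ) ≤ ζ1 := by
    apply div_nonneg _ hC.le
    have : (3:ℝ) ≤ (n:ℝ) := by exact_mod_cast hn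
    linarith
  have hz2 : (0:ℝ) ≤ ζ2 := div_nonneg (by positivity) hC.le
  have hr0 : 0 ≤ r := by
    have := hz1
    have h1 : (0:ℝ) ≤ 1 - lam := by linarith
    have h2 : (0:ℝ) ≤ 1 - γ := by linarith
    positivity
  have hCkey : (n.choose 2 : ℝ) = ((n-2).choose 2 : ℝ) + 2 * ((n:ℝ) - 2) + 1 := by
    rw [hn2]; exact_mod_cast hkey
  have hz1C : ζ1 * (n.choose 2 : ℝ) = (n:ℝ) - 2 := by
    simp only [ζ1]; field_simp
  have hz2C : ζ2 * (n.choose 2 : ℝ) = ((n-2).choose 2 : ℝ) := by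
    simp only [ζ2]; field_simp
  have hrC : r * (n.choose 2:ℝ) = ((n:ℝ)-2) * (1 - lam) + ((n:ℝ)-2) * (1-γ) + ((n-2).choose 2 : ℝ) := by
    simp only [hr, ζ1, ζ2]; field_simp
  have hr1 : r < 1 := by
    rw [← mul_lt_mul_iff_of_pos_right hC]
    have hn2pos : (0:ℝ) ≤ (n:ℝ) - 2 := by
      have : (3:ℝ) ≤ (n:ℝ) := by exact_mod_cast hn
      linarith
    rw [hrC, one_mul, hCkey]
    nlinarith
  -- rewrite tsum
  have hts : ∀ s : ℕ, ∑ l ∈ Finset.range (s + 1), ∑ m ∈ Finset.range (s + 1 - l),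
        ((s.factorial : ℝ) / ((l.factorial : ℝ) * (m.factorial : ℝ) *
            ((s - l - m).factorial : ℝ))) *
          ζ1 ^ (l + m) * ζ2 ^ (s - l - m) * (1 - lam) ^ l * (1 - γ) ^ m = r ^ s := by
    intro s
    rw [← trinom (ζ1 * (1 - lam)) (ζ1 * (1 - γ)) ζ2 s]
    apply Finset.sum_congr rfl; intro l _
    apply Finset.sum_congr rfl; intro m _
    rw [pow_add, mul_pow, mul_pow]
    ring
  rw [tsum_congr hts, tsum_geometric_of_lt_one hr0 hr1]
  have h1r : 1 - r = (1 + ((n:ℝ) - 2) * (lam + γ)) / (n.choose 2 : ℝ) := by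
    rw [eq_div_iff hC.ne', sub_mul, one_mul]
    rw [hrC, hCkey]; ring
  rw [h1r]
  have hpos : (0:ℝ) < 1 + ((n:ℝ) - 2) * (lam + γ) := by
    have : (3:ℝ) ≤ (n:ℝ) := by exact_mod_cast hn
    nlinarith
  rw [inv_div]
  field_simp
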